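/- Let A¹, …, A^d be complex matrices with A^k of size n_{2k−1} × n_{2k} and rank A^k = r_k, and define the order-2d tensor F(i₁, …, i_{2d}) = Π_{k=1}^{d} A^k(i_{2k−1}, i_{2k}). Then the CP-rank of F equals r₁·r₂·⋯·r_d: F admits a CP decomposition with Π_{k=1}^{d} r_k terms and no CP decomposition of F has fewer terms. Moreover this value equals the M⁺-rank of F. -/

import Mathlib

section stmt12aux

open Matrix

private lemma aux_fact {n p ρ : ℕ} (A : Matrix (Fin n) (Fin p) ℂ) (h : A.rank = ρ) :
    ∃ (U : Matrix (Fin n) (Fin ρ) ℂ) (V : Matrix (Fin ρ) (Fin p) ℂ)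
      (B : Matrix (Fin ρ) (Fin n) ℂ) (C : Matrix (Fin p) (Fin ρ) ℂ),
      A = U * V ∧ B * (A * C) = 1 := by
  classical
  have h' : Module.finrank ℂ (LinearMap.range A.mulVecLin) = ρ := h
  let b : Module.Basis (Fin ρ) ℂ (LinearMap.range A.mulVecLin) :=
    Module.finBasisOfFinrankEq ℂ _ h'
  let U : Matrix (Fin n) (Fin ρ) ℂ := fun i j => (b j : Fin n → ℂ) i
  have hcol : ∀ c : Fin p, A.mulVecLin (Pi.single c 1) ∈ LinearMap.range A.mulVecLin :=
    fun c => LinearMap.mem_range_self _ _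
  let V : Matrix (Fin ρ) (Fin p) ℂ := fun j c => b.repr ⟨_, hcol c⟩ j
  have hAUV : A = U * V := by
    ext i c
    have hsum := b.sum_repr ⟨_, hcol c⟩
    have h2 := congrArg (fun v : LinearMap.range A.mulVecLin => (v : Fin n → ℂ) i) hsum
    simp only [AddSubmonoidClass.coe_finset_sum, Finset.sum_apply, SetLike.val_smul,
      Pi.smul_apply, smul_eq_mul, Matrix.mulVecLin_apply] at h2
    rw [Matrix.mul_apply]
    rw [show A i c = (A *ᵥ Pi.single c 1) i by simp [Matrix.mulVec_single]]
    rw [← h2]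
    exact Finset.sum_congr rfl fun j _ => mul_comm _ _
  have hinj : Function.Injective U.mulVecLin := by
    rw [injective_iff_map_eq_zero]
    intro x hx
    have hcoe : ((∑ j, x j • b j : LinearMap.range A.mulVecLin) : Fin n → ℂ) = U *ᵥ x := by
      ext i
      simp [Matrix.mulVec, dotProduct, U, mul_comm]
    have hx0 : (∑ j, x j • b j : LinearMap.range A.mulVecLin) = 0 := by
      apply Subtype.coe_injective
      exact hcoe.trans hx
    have := Fintype.linearIndependent_iff.mp b.linearIndependent x hx0
    exact funext this
  obtain ⟨g, hg⟩ := LinearMap.exists_leftInverse_of_injective U.mulVecLin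
    (LinearMap.ker_eq_bot.mpr hinj)
  let B := LinearMap.toMatrix' g
  have hBU : B * U = 1 := by
    have hU : U = LinearMap.toMatrix' (Matrix.toLin' U) := (LinearMap.toMatrix'_toLin' U).symm
    calc B * U = LinearMap.toMatrix' g * LinearMap.toMatrix' (Matrix.toLin' U) := by rw [← hU]
      _ = LinearMap.toMatrix' (g.comp (Matrix.toLin' U)) := (LinearMap.toMatrix'_comp _ _).symm
      _ = LinearMap.toMatrix' (LinearMap.id) := by rw [Matrix.toLin'_apply', hg]
      _ = 1 := LinearMap.toMatrix'_id
  have hw : ∀ j : Fin ρ, ∃ v : Fin p → ℂ, A.mulVecLin v = (b j : Fin n → ℂ) :=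
    fun j => LinearMap.mem_range.mp (b j).2
  choose w hwspec using hw
  let C : Matrix (Fin p) (Fin ρ) ℂ := fun c j => w j c
  have hAC : A * C = U := by
    ext i j
    have := congrFun (hwspec j) i
    rw [Matrix.mul_apply]
    simpa [Matrix.mul_apply, Matrix.mulVecLin_apply, Matrix.mulVec, dotProduct, C, U] using this
  exact ⟨U, V, B, C, hAUV, by rw [hAC, hBU]⟩

private lemma aux_kron_mul {d : ℕ} {α β γ : Fin d → Type*}
    [∀ k, Fintype (α k)] [∀ k, Fintype (β k)] [∀ k, Fintype (γ k)]
    (X : ∀ k, Matrix (α k) (β k) ℂ) (Y : ∀ k, Matrix (β k) (γ k) ℂ) :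
    (Matrix.of fun (a : ∀ k, α k) (v : ∀ k, β k) => ∏ k, X k (a k) (v k)) *
      (Matrix.of fun (v : ∀ k, β k) (c : ∀ k, γ k) => ∏ k, Y k (v k) (c k)) =
      Matrix.of fun (a : ∀ k, α k) (c : ∀ k, γ k) => ∏ k, (X k * Y k) (a k) (c k) := by
  classical
  ext a c
  simp only [Matrix.mul_apply, Matrix.of_apply, Fintype.prod_sum]
  exact Finset.sum_congr rfl fun v _ => Finset.prod_mul_distrib.symm

private lemma aux_kron_one {d : ℕ} {β : Fin d → Type*} [∀ k, Fintype (β k)]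
    [∀ k, DecidableEq (β k)] :
    (Matrix.of fun (v v' : ∀ k, β k) => ∏ k, (1 : Matrix (β k) (β k) ℂ) (v k) (v' k)) = 1 := by
  ext v v'
  rw [Matrix.of_apply, Matrix.one_apply]
  by_cases h : v = v'
  · subst h; simp [Matrix.one_apply]
  · rw [if_neg h]
    obtain ⟨k, hk⟩ := Function.ne_iff.mp h
    exact Finset.prod_eq_zero (Finset.mem_univ k) (by simp [Matrix.one_apply, hk])

end stmt12aux

/-- For the order-`2d` tensor `F(i₁,…,i_{2d}) = ∏_k A^k(i_{2k−1}, i_{2k})` built from matrices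
`A^k` with `rank A^k = ρ k`, the CP-rank of `F` equals `∏_k ρ k`: `F` admits a CP
decomposition with `∏_k ρ k` terms and no CP decomposition has fewer terms.  Moreover this
value equals the M⁺-rank of `F`: some square unfolding (obtained from a partition
`φ : Fin d ⊕ Fin d ≃ Fin d × Bool` of the `2d` modes, indexed by `Fin d × Bool` with
`(k, false)` the row mode and `(k, true)` the column mode of `A^k`) has rank `∏_k ρ k`,
and every square unfolding has rank at most `∏_k ρ k`. -/
theorem stmt_12 {d : ℕ} {m m' : Fin d → ℕ} (ρ : Fin d → ℕ)
    (A : ∀ k : Fin d, Matrix (Fin (m k)) (Fin (m' k)) ℂ)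
    (hA : ∀ k, (A k).rank = ρ k)
    (F : (∀ p : Fin d × Bool, Fin (cond p.2 (m' p.1) (m p.1))) → ℂ)
    (hF : ∀ I, F I = ∏ k : Fin d, A k (I (k, false)) (I (k, true))) :
    (∃ a : (p : Fin d × Bool) → Fin (∏ k, ρ k) → Fin (cond p.2 (m' p.1) (m p.1)) → ℂ,
      ∀ I, F I = ∑ i, ∏ p, a p i (I p)) ∧
    (∀ (s : ℕ) (a : (p : Fin d × Bool) → Fin s → Fin (cond p.2 (m' p.1) (m p.1)) → ℂ),
      (∀ I, F I = ∑ i, ∏ p, a p i (I p)) → (∏ k, ρ k) ≤ s) ∧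
    (∃ φ : (Fin d ⊕ Fin d) ≃ (Fin d × Bool),
     ∃ M : Matrix ((j : Fin d) → Fin (cond (φ (Sum.inl j)).2 (m' (φ (Sum.inl j)).1) (m (φ (Sum.inl j)).1)))
                  ((j : Fin d) → Fin (cond (φ (Sum.inr j)).2 (m' (φ (Sum.inr j)).1) (m (φ (Sum.inr j)).1))) ℂ,
      (∀ I, M (fun j => I (φ (Sum.inl j))) (fun j => I (φ (Sum.inr j))) = F I) ∧
      M.rank = ∏ k, ρ k) ∧
    (∀ φ : (Fin d ⊕ Fin d) ≃ (Fin d × Bool),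
     ∀ M : Matrix ((j : Fin d) → Fin (cond (φ (Sum.inl j)).2 (m' (φ (Sum.inl j)).1) (m (φ (Sum.inl j)).1)))
                  ((j : Fin d) → Fin (cond (φ (Sum.inr j)).2 (m' (φ (Sum.inr j)).1) (m (φ (Sum.inr j)).1))) ℂ,
      (∀ I, M (fun j => I (φ (Sum.inl j))) (fun j => I (φ (Sum.inr j))) = F I) →
      M.rank ≤ ∏ k, ρ k) := by
  classical
  choose U V B C hUV hBC using fun k => aux_fact (A k) (hA k)
  have hcard : Fintype.card (∀ k, Fin (ρ k)) = ∏ k, ρ k := by simp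
  let e : Fin (∏ k, ρ k) ≃ ∀ k, Fin (ρ k) := (Fintype.equivFinOfCardEq hcard).symm
  let a : ∀ p : Fin d × Bool, Fin (∏ k, ρ k) → Fin (cond p.2 (m' p.1) (m p.1)) → ℂ :=
    fun p => match p with
    | (k, false) => fun i x => U k x (e i k)
    | (k, true) => fun i x => V k (e i k) x
  have hdecomp : ∀ I, F I = ∑ i, ∏ p, a p i (I p) := by
    intro I
    rw [hF]
    have h1 : ∀ k, A k (I (k, false)) (I (k, true))
        = ∑ j, U k (I (k, false)) j * V k j (I (k, true)) := by
      intro k; rw [hUV k, Matrix.mul_apply]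
    calc ∏ k, A k (I (k, false)) (I (k, true))
        = ∑ t : ∀ k, Fin (ρ k), ∏ k, U k (I (k, false)) (t k) * V k (t k) (I (k, true)) := by
          simp_rw [h1]; rw [Fintype.prod_sum]
      _ = ∑ i, ∏ p, a p i (I p) := by
          rw [← Equiv.sum_comp e
            (fun t => ∏ k, U k (I (k, false)) (t k) * V k (t k) (I (k, true)))]
          refine Finset.sum_congr rfl fun i _ => ?_
          rw [Fintype.prod_prod_type]
          refine Finset.prod_congr rfl fun k _ => ?_
          rw [Fintype.prod_bool]
          exact (mul_comm _ _)
  have key : ∀ (s : ℕ) (a' : (p : Fin d × Bool) → Fin s → Fin (cond p.2 (m' p.1) (m p.1)) → ℂ),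
      (∀ I, F I = ∑ i, ∏ p, a' p i (I p)) →
      ∀ (φ : (Fin d ⊕ Fin d) ≃ (Fin d × Bool))
        (M : Matrix ((j : Fin d) → Fin (cond (φ (Sum.inl j)).2 (m' (φ (Sum.inl j)).1) (m (φ (Sum.inl j)).1)))
                    ((j : Fin d) → Fin (cond (φ (Sum.inr j)).2 (m' (φ (Sum.inr j)).1) (m (φ (Sum.inr j)).1))) ℂ),
      (∀ I, M (fun j => I (φ (Sum.inl j))) (fun j => I (φ (Sum.inr j))) = F I) → M.rank ≤ s := by
    intro s a' ha' φ M hM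
    let X : Matrix ((j : Fin d) → Fin (cond (φ (Sum.inl j)).2 (m' (φ (Sum.inl j)).1) (m (φ (Sum.inl j)).1))) (Fin s) ℂ :=
      Matrix.of fun R i => ∏ j, a' (φ (Sum.inl j)) i (R j)
    let Y : Matrix (Fin s) ((j : Fin d) → Fin (cond (φ (Sum.inr j)).2 (m' (φ (Sum.inr j)).1) (m (φ (Sum.inr j)).1))) ℂ :=
      Matrix.of fun i Cc => ∏ j, a' (φ (Sum.inr j)) i (Cc j)
    have hM' : M = X * Y := by
      ext R Cc
      let I₀ : ∀ q : Fin d ⊕ Fin d, Fin (cond (φ q).2 (m' (φ q).1) (m (φ q).1)) :=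
        fun q => Sum.rec (motive := fun q => Fin (cond (φ q).2 (m' (φ q).1) (m (φ q).1))) R Cc q
      let I : ∀ p : Fin d × Bool, Fin (cond p.2 (m' p.1) (m p.1)) :=
        fun p => cast (congrArg (fun p : Fin d × Bool => Fin (cond p.2 (m' p.1) (m p.1)))
          (φ.apply_symm_apply p)) (I₀ (φ.symm p))
      have hIq : ∀ q, I (φ q) = I₀ q := by
        intro q
        have h1 : HEq (I (φ q)) (I₀ (φ.symm (φ q))) := cast_heq _ _
        have h2 : HEq (I₀ (φ.symm (φ q))) (I₀ q) := congr_arg_heq I₀ (φ.symm_apply_apply q)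
        exact eq_of_heq (h1.trans h2)
      have hR : (fun j => I (φ (Sum.inl j))) = R := funext fun j => hIq (Sum.inl j)
      have hC : (fun j => I (φ (Sum.inr j))) = Cc := funext fun j => hIq (Sum.inr j)
      have hMI := hM I
      rw [hR, hC] at hMI
      rw [hMI, ha' I, Matrix.mul_apply]
      refine Finset.sum_congr rfl fun i _ => ?_
      rw [← Equiv.prod_comp φ (fun p => a' p i (I p)), Fintype.prod_sum_type]
      simp only [X, Y, Matrix.of_apply]
      congr 1
      · refine Finset.prod_congr rfl fun j _ => ?_
        rw [hIq (Sum.inl j)]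
      · refine Finset.prod_congr rfl fun j _ => ?_
        rw [hIq (Sum.inr j)]
    calc M.rank = (X * Y).rank := by rw [hM']
      _ ≤ X.rank := Matrix.rank_mul_le_left X Y
      _ ≤ Fintype.card (Fin s) := Matrix.rank_le_card_width X
      _ = s := Fintype.card_fin s
  let φ₀ : (Fin d ⊕ Fin d) ≃ (Fin d × Bool) :=
    { toFun := Sum.elim (fun k => (k, false)) (fun k => (k, true))
      invFun := fun p => cond p.2 (Sum.inr p.1) (Sum.inl p.1)
      left_inv := by rintro (k | k) <;> rfl
      right_inv := by rintro ⟨k, _ | _⟩ <;> rfl }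
  let M₀ : Matrix ((j : Fin d) → Fin (m j)) ((j : Fin d) → Fin (m' j)) ℂ :=
    Matrix.of fun R Cc => ∏ k, A k (R k) (Cc k)
  have hM₀ : ∀ I : ∀ p : Fin d × Bool, Fin (cond p.2 (m' p.1) (m p.1)),
      M₀ (fun j => I (φ₀ (Sum.inl j))) (fun j => I (φ₀ (Sum.inr j))) = F I :=
    fun I => (hF I).symm
  have hle : M₀.rank ≤ ∏ k, ρ k := key _ a hdecomp φ₀ M₀ hM₀
  have hge : (∏ k, ρ k) ≤ M₀.rank := by
    let G : Matrix (∀ k, Fin (ρ k)) (∀ k, Fin (m k)) ℂ :=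
      Matrix.of fun t R => ∏ k, B k (t k) (R k)
    let H : Matrix (∀ k, Fin (m' k)) (∀ k, Fin (ρ k)) ℂ :=
      Matrix.of fun Cc t => ∏ k, C k (Cc k) (t k)
    have h1 : M₀ * H = Matrix.of fun R t => ∏ k, (A k * C k) (R k) (t k) := aux_kron_mul A C
    have h2 : G * (M₀ * H) =
        Matrix.of fun t t' => ∏ k, (B k * (A k * C k)) (t k) (t' k) := by
      rw [h1]; exact aux_kron_mul B (fun k => A k * C k)
    have h3 : G * (M₀ * H) = 1 := by
      rw [h2]
      have h4 : (fun (t t' : ∀ k, Fin (ρ k)) => ∏ k, (B k * (A k * C k)) (t k) (t' k))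
          = fun t t' => ∏ k, (1 : Matrix (Fin (ρ k)) (Fin (ρ k)) ℂ) (t k) (t' k) := by
        funext t t'
        exact Finset.prod_congr rfl fun k _ => by rw [hBC k]
      rw [show (Matrix.of fun (t t' : ∀ k, Fin (ρ k)) => ∏ k, (B k * (A k * C k)) (t k) (t' k))
          = Matrix.of fun t t' => ∏ k, (1 : Matrix (Fin (ρ k)) (Fin (ρ k)) ℂ) (t k) (t' k)
        from congrArg Matrix.of h4]
      exact aux_kron_one
    calc (∏ k, ρ k) = (1 : Matrix (∀ k, Fin (ρ k)) (∀ k, Fin (ρ k)) ℂ).rank := by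
          rw [Matrix.rank_one]; simp
      _ = (G * (M₀ * H)).rank := by rw [h3]
      _ ≤ (M₀ * H).rank := Matrix.rank_mul_le_right _ _
      _ ≤ M₀.rank := Matrix.rank_mul_le_left _ _
  have hrank : M₀.rank = ∏ k, ρ k := le_antisymm hle hge
  refine ⟨⟨a, hdecomp⟩, fun s a' ha' => ?_, ⟨φ₀, M₀, hM₀, hrank⟩,
    fun φ M hM => key _ a hdecomp φ M hM⟩
  calc (∏ k, ρ k) = M₀.rank := hrank.symm
    _ ≤ s := key s a' ha' φ₀ M₀ hM₀
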